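/- Let Ω⁰ be a polyhedral cone domain in ℝ^{n+1}. There exist constants ε_B ∈ (0,1) and c_B ≥ 1, depending only on n, such that the following holds for every ε ≤ ε_B. Let Ψ : ℝ^{n+1} → ℝ^{n+1} be linear with ‖Ψ − Id‖ ≤ ε, and let Φ : B_2 → ℝ^{n+1} be a C² diffeomorphism onto its image with Φ(0) = 0, DΦ|_0 = Id and sup_{y ∈ B_2}(|Φ(y) − y| + ‖DΦ|_y − Id‖ + ‖D²Φ|_y‖) ≤ ε. Fix i ∈ {0, …, n+1} and suppose S := ∂_{i−1}Ω⁰ ∩ B_{3/2} is nonempty. Then for every z ∈ ∂_iΩ⁰ ∩ B_1, setting x := Φ(Ψ(z)), one has (1 − c_B ε)·dist(x, Φ(Ψ(S))) ≤ dist(z, S) ≤ (1 + c_B ε)·dist(x, Φ(Ψ(S))). -/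

import Mathlib

open scoped RealInnerProductSpace ENNReal
open Metric

/-- The `k`-th stratum (for `k : ℤ`, with `k = -1` giving `∅`) of the polyhedral cone
domain `⋂ j, {x | ⟪x, ν j⟫ ≤ 0}`. -/
noncomputable def stratumLE (n N : ℕ) (ν : Fin N → EuclideanSpace ℝ (Fin (n + 1)))
    (k : ℤ) : Set (EuclideanSpace ℝ (Fin (n + 1))) :=
  {x | (∀ j, ⟪x, ν j⟫ ≤ 0) ∧
    (Module.finrank ℝ
      ↥(⨅ j ∈ {j : Fin N | ⟪x, ν j⟫ = 0}, (Submodule.span ℝ {ν j})ᗮ) : ℤ) ≤ k}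

lemma my_le_infDist {X : Type*} [PseudoMetricSpace X] {s : Set X} (hs : s.Nonempty)
    {x : X} {b : ℝ} (h : ∀ y ∈ s, b ≤ dist x y) : b ≤ Metric.infDist x s := by
  by_contra hb
  push_neg at hb
  obtain ⟨y, hy, hlt⟩ := (Metric.infDist_lt_iff hs).1 hb
  exact (h y hy).not_gt hlt

abbrev Esp (n : ℕ) := EuclideanSpace ℝ (Fin (n + 1))

set_option maxHeartbeats 1000000 in
/-- Comparability of the distance of `z ∈ ∂_iΩ⁰` to
`S = ∂_{i−1}Ω⁰ ∩ B_{3/2}` with the distance of `x = Φ(Ψ(z))` to `Φ(Ψ(S))`, for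
perturbations `Φ, Ψ` of the identity. -/
theorem stmt_10 (n : ℕ) :
    ∃ εB cB : ℝ, 0 < εB ∧ εB < 1 ∧ 1 ≤ cB ∧
      ∀ (N : ℕ) (ν : Fin N → EuclideanSpace ℝ (Fin (n + 1))), (∀ j, ‖ν j‖ = 1) →
      ∀ Ω0 : Set (EuclideanSpace ℝ (Fin (n + 1))),
        Ω0 = ⋂ j, {x : EuclideanSpace ℝ (Fin (n + 1)) | ⟪x, ν j⟫ ≤ 0} →
        (interior Ω0).Nonempty →
      ∀ ε : ℝ, 0 ≤ ε → ε ≤ εB →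
      ∀ Ψ : EuclideanSpace ℝ (Fin (n + 1)) →L[ℝ] EuclideanSpace ℝ (Fin (n + 1)),
        ‖Ψ - ContinuousLinearMap.id ℝ (EuclideanSpace ℝ (Fin (n + 1)))‖ ≤ ε →
      ∀ Φ : EuclideanSpace ℝ (Fin (n + 1)) → EuclideanSpace ℝ (Fin (n + 1)),
        ContDiffOn ℝ 2 Φ (ball 0 2) →
        Set.InjOn Φ (ball 0 2) →
        Φ 0 = 0 →
        fderiv ℝ Φ 0 = ContinuousLinearMap.id ℝ (EuclideanSpace ℝ (Fin (n + 1))) →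
        (∀ y ∈ ball (0 : EuclideanSpace ℝ (Fin (n + 1))) 2,
          ‖Φ y - y‖ +
            ‖fderiv ℝ Φ y - ContinuousLinearMap.id ℝ (EuclideanSpace ℝ (Fin (n + 1)))‖ +
            ‖fderiv ℝ (fderiv ℝ Φ) y‖ ≤ ε) →
      ∀ i : ℕ, i ≤ n + 1 →
        (stratumLE n N ν ((i : ℤ) - 1) ∩ ball 0 (3 / 2)).Nonempty →
      ∀ z ∈ stratumLE n N ν (i : ℤ) ∩ ball 0 1,
        (1 - cB * ε) *
            Metric.infDist (Φ (Ψ z))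
              ((Φ ∘ ⇑Ψ) '' (stratumLE n N ν ((i : ℤ) - 1) ∩ ball 0 (3 / 2))) ≤
          Metric.infDist z (stratumLE n N ν ((i : ℤ) - 1) ∩ ball 0 (3 / 2)) ∧
        Metric.infDist z (stratumLE n N ν ((i : ℤ) - 1) ∩ ball 0 (3 / 2)) ≤
          (1 + cB * ε) *
            Metric.infDist (Φ (Ψ z))
              ((Φ ∘ ⇑Ψ) '' (stratumLE n N ν ((i : ℤ) - 1) ∩ ball 0 (3 / 2))) := by
  refine ⟨1/32, 16, by norm_num, by norm_num, by norm_num, ?_⟩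
  intro N ν hν Ω0 hΩ0 hint ε hε0 hεB Ψ hΨ Φ hΦsm hΦinj hΦ0 hDΦ0 hΦsup i hi hS z hz
  obtain ⟨hzS, hz1⟩ := hz
  set S := stratumLE n N ν ((i : ℤ) - 1) ∩ ball (0 : Esp n) (3 / 2) with hSdef
  set F : Esp n → Esp n := Φ ∘ ⇑Ψ with hFdef
  -- Ψ is close to identity
  have hΨ1 : ∀ u : Esp n, ‖Ψ u - u‖ ≤ ε * ‖u‖ := by
    intro u
    have h := (Ψ - ContinuousLinearMap.id ℝ (Esp n)).le_opNorm u
    have h2 : (Ψ - ContinuousLinearMap.id ℝ (Esp n)) u = Ψ u - u := by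
      simp [ContinuousLinearMap.sub_apply]
    rw [h2] at h
    exact h.trans (mul_le_mul_of_nonneg_right hΨ (norm_nonneg u))
  have hΨlipU : ∀ u v : Esp n, ‖Ψ u - Ψ v‖ ≤ (1 + ε) * ‖u - v‖ := by
    intro u v
    have h := hΨ1 (u - v)
    rw [map_sub] at h
    have h2 := norm_sub_norm_le (Ψ u - Ψ v) (u - v)
    linarith
  have hΨlipL : ∀ u v : Esp n, (1 - ε) * ‖u - v‖ ≤ ‖Ψ u - Ψ v‖ := by
    intro u v
    have h := hΨ1 (u - v)
    rw [map_sub] at h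
    have h2 := norm_sub_norm_le (u - v) (Ψ u - Ψ v)
    have h3 : ‖u - v - (Ψ u - Ψ v)‖ = ‖Ψ u - Ψ v - (u - v)‖ := by
      rw [show u - v - (Ψ u - Ψ v) = -(Ψ u - Ψ v - (u - v)) by abel, norm_neg]
    linarith
  -- Φ is differentiable on the ball with derivative close to identity
  have hΦdiff : ∀ y ∈ ball (0 : Esp n) 2, DifferentiableAt ℝ Φ y := by
    intro y hy
    exact (hΦsm.differentiableOn (by norm_num)).differentiableAt (isOpen_ball.mem_nhds hy)
  have key : ∀ a ∈ ball (0 : Esp n) 2, ∀ b ∈ ball (0 : Esp n) 2,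
      ‖(Φ a - a) - (Φ b - b)‖ ≤ ε * ‖a - b‖ := by
    intro a ha b hb
    have hg : ∀ x ∈ ball (0 : Esp n) 2, DifferentiableAt ℝ (fun y => Φ y - y) x :=
      fun x hx => (hΦdiff x hx).sub differentiableAt_id
    have hbd : ∀ x ∈ ball (0 : Esp n) 2, ‖fderiv ℝ (fun y => Φ y - y) x‖ ≤ ε := by
      intro x hx
      have hf : fderiv ℝ (fun y => Φ y - y) x
          = fderiv ℝ Φ x - ContinuousLinearMap.id ℝ (Esp n) := by
        rw [fderiv_fun_sub (hΦdiff x hx) differentiableAt_fun_id]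
        congr 1
        exact fderiv_id
      rw [hf]
      have h := hΦsup x hx
      have h1 := norm_nonneg (Φ x - x)
      have h2 := norm_nonneg (fderiv ℝ (fderiv ℝ Φ) x)
      linarith
    exact (convex_ball (0 : Esp n) 2).norm_image_sub_le_of_norm_fderiv_le hg hbd hb ha
  have hΦlipU : ∀ a ∈ ball (0 : Esp n) 2, ∀ b ∈ ball (0 : Esp n) 2,
      ‖Φ a - Φ b‖ ≤ (1 + ε) * ‖a - b‖ := by
    intro a ha b hb
    have h := key a ha b hb
    have h2 : Φ a - Φ b = (a - b) + ((Φ a - a) - (Φ b - b)) := by abel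
    have h3 : ‖Φ a - Φ b‖ ≤ ‖a - b‖ + ‖(Φ a - a) - (Φ b - b)‖ := by
      rw [h2]; exact norm_add_le _ _
    linarith
  have hΦlipL : ∀ a ∈ ball (0 : Esp n) 2, ∀ b ∈ ball (0 : Esp n) 2,
      (1 - ε) * ‖a - b‖ ≤ ‖Φ a - Φ b‖ := by
    intro a ha b hb
    have h := key a ha b hb
    have h2 : a - b = (Φ a - Φ b) - ((Φ a - a) - (Φ b - b)) := by abel
    have h3 : ‖a - b‖ ≤ ‖Φ a - Φ b‖ + ‖(Φ a - a) - (Φ b - b)‖ := by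
      conv_lhs => rw [h2]
      exact norm_sub_le _ _
    linarith
  -- Ψ maps the relevant points into the ball of radius 2
  have hΨmem : ∀ u : Esp n, u ∈ ball (0 : Esp n) (3 / 2) → Ψ u ∈ ball (0 : Esp n) 2 := by
    intro u hu
    rw [mem_ball, dist_zero_right] at hu ⊢
    have h := hΨ1 u
    have h2 := norm_sub_norm_le (Ψ u) u
    nlinarith [norm_nonneg u]
  have hz32 : z ∈ ball (0 : Esp n) (3 / 2) := by
    rw [mem_ball, dist_zero_right] at hz1 ⊢; linarith
  -- combined bi-Lipschitz bounds
  have hFup : ∀ s ∈ S, dist (F z) (F s) ≤ (1 + 3 * ε) * dist z s := by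
    intro s hs
    have hs32 : s ∈ ball (0 : Esp n) (3 / 2) := hs.2
    have h1 := hΦlipU (Ψ z) (hΨmem z hz32) (Ψ s) (hΨmem s hs32)
    have h2 := hΨlipU z s
    rw [dist_eq_norm, dist_eq_norm]
    calc ‖F z - F s‖ ≤ (1 + ε) * ‖Ψ z - Ψ s‖ := h1
      _ ≤ (1 + ε) * ((1 + ε) * ‖z - s‖) :=
          mul_le_mul_of_nonneg_left h2 (by linarith)
      _ ≤ (1 + 3 * ε) * ‖z - s‖ := by
          nlinarith [mul_nonneg (mul_nonneg hε0 (show (0:ℝ) ≤ 1 - ε by linarith))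
            (norm_nonneg (z - s))]
  have hFlo : ∀ s ∈ S, (1 - 2 * ε) * dist z s ≤ dist (F z) (F s) := by
    intro s hs
    have hs32 : s ∈ ball (0 : Esp n) (3 / 2) := hs.2
    have h1 := hΦlipL (Ψ z) (hΨmem z hz32) (Ψ s) (hΨmem s hs32)
    have h2 := hΨlipL z s
    rw [dist_eq_norm, dist_eq_norm]
    calc (1 - 2 * ε) * ‖z - s‖ ≤ (1 - ε) * ((1 - ε) * ‖z - s‖) := by
          nlinarith [mul_nonneg (mul_nonneg hε0 hε0) (norm_nonneg (z - s))]
      _ ≤ (1 - ε) * ‖Ψ z - Ψ s‖ := mul_le_mul_of_nonneg_left h2 (by linarith)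
      _ ≤ ‖F z - F s‖ := h1
  have himg_ne : (F '' S).Nonempty := hS.image F
  set d := Metric.infDist z S with hd
  set dF := Metric.infDist (F z) (F '' S) with hdF
  have hd0 : 0 ≤ d := Metric.infDist_nonneg
  have hdF0 : 0 ≤ dF := Metric.infDist_nonneg
  have hup : dF ≤ (1 + 3 * ε) * d := by
    have hpos : (0:ℝ) < 1 + 3 * ε := by linarith
    rw [← div_le_iff₀' hpos]
    apply my_le_infDist hS
    intro s hs
    rw [div_le_iff₀' hpos]
    exact (Metric.infDist_le_dist_of_mem (Set.mem_image_of_mem F hs)).trans (hFup s hs)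
  have hlo : (1 - 2 * ε) * d ≤ dF := by
    apply my_le_infDist himg_ne
    rintro p ⟨s, hs, rfl⟩
    calc (1 - 2 * ε) * d ≤ (1 - 2 * ε) * dist z s :=
          mul_le_mul_of_nonneg_left (Metric.infDist_le_dist_of_mem hs) (by linarith)
      _ ≤ dist (F z) (F s) := hFlo s hs
  have hfold : Metric.infDist (Φ (Ψ z)) (F '' S) = dF := rfl
  rw [hfold]
  clear hd hdF hfold
  clear_value d dF
  constructor
  · nlinarith [mul_nonneg hε0 hd0, mul_nonneg hε0 hdF0, mul_nonneg (mul_nonneg hε0 hε0) hd0]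
  · have h2 : (1 + 16 * ε) * ((1 - 2 * ε) * d) ≤ (1 + 16 * ε) * dF :=
      mul_le_mul_of_nonneg_left hlo (by linarith)
    have h3 : 32 * ε * (ε * d) ≤ 1 * (ε * d) :=
      mul_le_mul_of_nonneg_right (by linarith) (mul_nonneg hε0 hd0)
    nlinarith [mul_nonneg hε0 hd0]
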